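/- Let p > 1 and 0 < s < p − 1. Then there exists a constant C > 0 such that for all i, j ∈ ℕ: Σ_{n∈ℕ} ((1+n)/((1+i)(1+j)))^s · (1 + |n − i − j|)^(−p) ≤ C, i.e. the sum is bounded uniformly in i and j. -/

import Mathlib

set_option maxHeartbeats 1000000

/-- the sum `Σ_n ((1+n)/((1+i)(1+j)))^s (1+|n-i-j|)^(-p)` is bounded
uniformly in `i, j ∈ ℕ` when `p > 1` and `0 < s < p - 1`. -/
theorem weighted_kernel_sum_uniformly_bounded
    (p s : ℝ) (hp : 1 < p) (hs0 : 0 < s) (hsp : s < p - 1) :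
    ∃ C > 0, ∀ i j : ℕ,
      Summable (fun n : ℕ =>
        ((1 + n : ℝ) / ((1 + i) * (1 + j))) ^ s * (1 + |(n : ℤ) - i - j| : ℝ) ^ (-p)) ∧
      (∑' n : ℕ,
        ((1 + n : ℝ) / ((1 + i) * (1 + j))) ^ s * (1 + |(n : ℤ) - i - j| : ℝ) ^ (-p)) ≤ C := by
  set q : ℝ := p - s with hqdef
  have hq : 1 < q := by linarith
  set G : ℤ → ℝ := fun z => (1 + |(z : ℝ)|) ^ (-q) with hGdef
  have hGnonneg : ∀ z, 0 ≤ G z := fun z => Real.rpow_nonneg (by positivity) _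
  have hGnat : Summable (fun n : ℕ => (1 + (n : ℝ)) ^ (-q)) := by
    have h := (Real.summable_one_div_nat_rpow (p := q)).mpr hq
    have h2 : Summable (fun n : ℕ => 1 / ((n + 1 : ℕ) : ℝ) ^ q) :=
      (summable_nat_add_iff 1).mpr h
    refine h2.congr fun n => ?_
    push_cast
    rw [Real.rpow_neg (by positivity), one_div, add_comm 1 (n:ℝ)]
  have hG : Summable G := by
    apply Summable.of_nat_of_neg
    · refine hGnat.congr fun n => ?_
      simp [hGdef]
    · refine hGnat.congr fun n => ?_
      simp [hGdef]
  have hG0 : 0 < G 0 := by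
    simp only [hGdef, Int.cast_zero, abs_zero, add_zero]
    exact Real.rpow_pos_of_pos one_pos _
  refine ⟨∑' z : ℤ, G z, hG.tsum_pos hGnonneg 0 hG0, fun i j => ?_⟩
  set m : ℤ := (i : ℤ) + j with hm
  have hGshift : Summable (fun z : ℤ => G (z - m)) :=
    (Equiv.subRight m).summable_iff.mpr hG
  have hGnatshift : Summable (fun n : ℕ => G ((n : ℤ) - m)) :=
    hGshift.comp_injective (fun a b h => by exact_mod_cast h : Function.Injective (Nat.cast : ℕ → ℤ))
  have key : ∀ n : ℕ,
      ((1 + n : ℝ) / ((1 + i) * (1 + j))) ^ s * (1 + |(n : ℤ) - i - j| : ℝ) ^ (-p)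
        ≤ G ((n : ℤ) - m) := by
    intro n
    have habs : ((|(n : ℤ) - i - j| : ℤ) : ℝ) = |((n : ℝ) - i - j)| := by
      push_cast [Int.cast_abs]
      ring_nf
    rw [habs]
    set d : ℝ := |((n : ℝ) - i - j)| with hd
    have hd0 : (0 : ℝ) ≤ d := abs_nonneg _
    have hdge : ((n : ℝ) - i - j) ≤ d := le_abs_self _
    have hin : (0:ℝ) ≤ (i:ℝ) := Nat.cast_nonneg i
    have hjn : (0:ℝ) ≤ (j:ℝ) := Nat.cast_nonneg j
    have hnn : (0:ℝ) ≤ (n:ℝ) := Nat.cast_nonneg n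
    have hratio : (1 + n : ℝ) / ((1 + i) * (1 + j)) ≤ 1 + d := by
      rw [div_le_iff₀ (by positivity)]
      nlinarith [mul_nonneg hin hjn, mul_nonneg (mul_nonneg hin hjn) hd0]
    have hpos : (0:ℝ) < 1 + d := by linarith
    have h1 : ((1 + n : ℝ) / ((1 + i) * (1 + j))) ^ s ≤ (1 + d) ^ s :=
      Real.rpow_le_rpow (by positivity) hratio hs0.le
    have h2 : (0:ℝ) ≤ (1 + d) ^ (-p) := Real.rpow_nonneg hpos.le _
    have hGval : G ((n : ℤ) - m) = (1 + d) ^ (-q) := by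
      simp only [hGdef, hm, hd]
      push_cast [Int.cast_abs]
      ring_nf
    calc ((1 + n : ℝ) / ((1 + i) * (1 + j))) ^ s * (1 + d) ^ (-p)
        ≤ (1 + d) ^ s * (1 + d) ^ (-p) := mul_le_mul_of_nonneg_right h1 h2
      _ = (1 + d) ^ (-q) := by
          rw [← Real.rpow_add hpos, hqdef]; ring_nf
      _ = G ((n : ℤ) - m) := hGval.symm
  have hterm_nonneg : ∀ n : ℕ, 0 ≤
      ((1 + n : ℝ) / ((1 + i) * (1 + j))) ^ s * (1 + |(n : ℤ) - i - j| : ℝ) ^ (-p) := by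
    intro n
    exact mul_nonneg (Real.rpow_nonneg (by positivity) _) (Real.rpow_nonneg (by positivity) _)
  have hsum : Summable (fun n : ℕ =>
      ((1 + n : ℝ) / ((1 + i) * (1 + j))) ^ s * (1 + |(n : ℤ) - i - j| : ℝ) ^ (-p)) :=
    Summable.of_nonneg_of_le hterm_nonneg key hGnatshift
  refine ⟨hsum, ?_⟩
  calc (∑' n : ℕ, ((1 + n : ℝ) / ((1 + i) * (1 + j))) ^ s * (1 + |(n : ℤ) - i - j| : ℝ) ^ (-p))
      ≤ ∑' n : ℕ, G ((n : ℤ) - m) := hsum.tsum_le_tsum key hGnatshift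
    _ ≤ ∑' z : ℤ, G (z - m) :=
        hGnatshift.tsum_le_tsum_of_inj (fun n : ℕ => (n : ℤ)) (fun a b h => by exact_mod_cast h : Function.Injective (Nat.cast : ℕ → ℤ))
          (fun z _ => hGnonneg _) (fun n => le_rfl) hGshift
    _ = ∑' z : ℤ, G z := (Equiv.subRight m).tsum_eq G
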